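/- Let f : ℝ^n × ℝ^m → ℝ^n be homogeneous of degree ν > 0 with respect to the dilation pair (λ^r, λ^q), i.e., f(λ^r(ε)x, λ^q(ε)u) = λ^r(ε)^ν f(x,u) for all x, u, ε > 0. Then for any initial state x, any input sequence u = (u_0, u_1, ...), any ε > 0, and any time k ≥ 0, the solution of x⁺ = f(x,u) satisfies φ(k, λ^r(ε)x, Λ(ε)u) = λ^r(ε)^(ν^k) φ(k, x, u), where Λ(ε)u denotes the scaled input sequence whose k-th element is λ^q(ε)^(ν^k) u_k. -/
import Mathlib


noncomputable section

/-- Dilation map `λ^r(ε)x = (ε^{r_1}x_1, ..., ε^{r_n}x_n)`. -/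
def dil {n : ℕ} (r : Fin n → ℝ) (ε : ℝ) (x : Fin n → ℝ) : Fin n → ℝ :=
  fun i => ε ^ (r i) * x i

/-- Powered dilation `λ^r(ε)^c x = (ε^{c r_1}x_1, ..., ε^{c r_n}x_n)`. -/
def dilPow {n : ℕ} (r : Fin n → ℝ) (ε c : ℝ) (x : Fin n → ℝ) : Fin n → ℝ :=
  fun i => ε ^ (c * r i) * x i

/-- Solution map of `x⁺ = f(x,u)`: `sol f u x k = φ(k, x, u)`. -/
def sol {n m : ℕ} (f : (Fin n → ℝ) → (Fin m → ℝ) → Fin n → ℝ)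
    (u : ℕ → Fin m → ℝ) (x : Fin n → ℝ) : ℕ → Fin n → ℝ
  | 0 => x
  | k + 1 => f (sol f u x k) (u k)

lemma dilPow_eq_dil {p : ℕ} (s : Fin p → ℝ) {ε : ℝ} (hε : 0 < ε) (c : ℝ)
    (y : Fin p → ℝ) : dilPow s ε c y = dil s (ε ^ c) y := by
  funext i
  simp [dilPow, dil, Real.rpow_mul hε.le]

theorem stmt0 {n m : ℕ} (f : (Fin n → ℝ) → (Fin m → ℝ) → Fin n → ℝ)
    (r : Fin n → ℝ) (q : Fin m → ℝ) (ν : ℝ)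
    (hr : ∀ i, 0 < r i) (hq : ∀ j, 0 < q j) (hν : 0 < ν)
    (hf : ∀ x u (ε : ℝ), 0 < ε → f (dil r ε x) (dil q ε u) = dilPow r ε ν (f x u)) :
    ∀ (x : Fin n → ℝ) (u : ℕ → Fin m → ℝ) (ε : ℝ), 0 < ε → ∀ k : ℕ,
      sol f (fun j => dilPow q ε (ν ^ j) (u j)) (dil r ε x) k
        = dilPow r ε (ν ^ k) (sol f u x k) := by
  intro x u ε hε k
  induction k with
  | zero =>
    funext i
    simp [sol, dil, dilPow]
  | succ k ih =>
    have hε' : (0 : ℝ) < ε ^ (ν ^ k) := Real.rpow_pos_of_pos hε _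
    calc sol f (fun j => dilPow q ε (ν ^ j) (u j)) (dil r ε x) (k + 1)
        = f (dilPow r ε (ν ^ k) (sol f u x k)) (dilPow q ε (ν ^ k) (u k)) := by
          simp [sol, ih]
      _ = f (dil r (ε ^ (ν ^ k)) (sol f u x k)) (dil q (ε ^ (ν ^ k)) (u k)) := by
          rw [dilPow_eq_dil r hε, dilPow_eq_dil q hε]
      _ = dilPow r (ε ^ (ν ^ k)) ν (f (sol f u x k) (u k)) := hf _ _ _ hε'
      _ = dilPow r ε (ν ^ (k + 1)) (sol f u x (k + 1)) := by
          funext i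
          simp only [dilPow, sol]
          rw [← Real.rpow_mul hε.le]
          ring_nf
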